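/- Let L(x) = −∫₀ˣ log(2 sin t) dt be the Lobachevsky function. Then the function s(θ) = ((π − 2θ)/(2π)) · (log(cot θ) − log(cot(θ/2))/cos θ) + (1/π)(L(θ) + L(π/2 − θ)) satisfies lim_{θ→0⁺} s(θ) = −(1/2) log 2 and lim_{θ→π/2⁻} s(θ) = 0. -/

import Mathlib

open Real Filter Topology

open MeasureTheory intervalIntegral

lemma neg_log_le (t : ℝ) (ht : 0 < t) : -Real.log t ≤ 2 * t ^ (-(1/2) : ℝ) := by
  have h1 : Real.log t = 2 * Real.log (t ^ ((1/2):ℝ)) := by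
    rw [Real.log_rpow ht]; ring
  have h2 : Real.log (t ^ ((1/2):ℝ)) ≥ 1 - (t ^ ((1/2):ℝ))⁻¹ := by
    have := Real.log_le_sub_one_of_pos (x := (t ^ ((1/2):ℝ))⁻¹)
      (by positivity)
    rw [Real.log_inv] at this
    linarith
  have h3 : (t ^ ((1/2):ℝ))⁻¹ = t ^ (-(1/2) : ℝ) := by
    rw [← Real.rpow_neg ht.le]
  nlinarith [Real.rpow_pos_of_pos ht (-(1/2):ℝ)]

lemma integrableOn_log_sin2 :
    IntervalIntegrable (fun t => Real.log (2 * Real.sin t)) volume 0 (π / 2) := by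
  have hpi : (0:ℝ) < π / 2 := by positivity
  rw [intervalIntegrable_iff_integrableOn_Ioc_of_le hpi.le]
  have hbound : IntegrableOn (fun t : ℝ => Real.log π + 2 * t ^ (-(1/2) : ℝ))
      (Set.Ioc 0 (π/2)) volume := by
    apply Integrable.add
    · exact integrableOn_const (by simp [hpi])
    · have : IntervalIntegrable (fun t : ℝ => t ^ (-(1/2) : ℝ)) volume 0 (π/2) :=
        intervalIntegral.intervalIntegrable_rpow' (by norm_num)
      rw [intervalIntegrable_iff_integrableOn_Ioc_of_le hpi.le] at this
      exact this.const_mul 2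
  apply hbound.integrable.mono'
  · exact ((Real.measurable_log.comp (measurable_const.mul Real.measurable_sin))).aestronglyMeasurable
  · rw [ae_restrict_iff' measurableSet_Ioc]
    filter_upwards with t ht
    obtain ⟨ht0, htp⟩ := ht
    have hs : 0 < Real.sin t := Real.sin_pos_of_pos_of_lt_pi ht0 (by linarith [Real.pi_gt_three])
    have hle : Real.sin t ≤ 1 := Real.sin_le_one t
    have hlow : 2 / π * t ≤ Real.sin t := Real.mul_le_sin ht0.le htp
    -- log (2 sin t) ≤ log 2 ≤ log π, and log (2 sin t) ≥ log (4t/π) ≥ log t - log π ... 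
    have h2s : Real.log (2 * Real.sin t) ≤ Real.log 2 := by
      have := Real.log_le_log (by positivity) (by nlinarith : 2 * Real.sin t ≤ 2)
      exact this
    have hl2 : Real.log 2 ≤ Real.log π := Real.log_le_log (by norm_num)
      (by linarith [Real.pi_gt_three])
    have hlow2 : Real.log t - Real.log π ≤ Real.log (2 * Real.sin t) := by
      have h4 : t / π ≤ 2 * Real.sin t := by
        have hπ : (0:ℝ) < π := Real.pi_pos
        rw [div_le_iff₀ hπ]
        have he : 2/π*t*π = 2*t := by field_simp
        nlinarith [mul_le_mul_of_nonneg_right hlow hπ.le]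
      calc Real.log t - Real.log π = Real.log (t / π) := (Real.log_div (ne_of_gt ht0) (ne_of_gt Real.pi_pos)).symm
        _ ≤ Real.log (2 * Real.sin t) := Real.log_le_log (by positivity) h4
    rw [Real.norm_eq_abs, abs_le]
    constructor
    · have := neg_log_le t ht0
      nlinarith [Real.rpow_pos_of_pos ht0 (-(1/2):ℝ), Real.log_nonneg (by linarith [Real.pi_gt_three] : (1:ℝ) ≤ π)]
    · nlinarith [Real.rpow_pos_of_pos ht0 (-(1/2):ℝ), Real.log_nonneg (by linarith [Real.pi_gt_three] : (1:ℝ) ≤ π)]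

lemma uIcc_sub' {a b c d : ℝ} (h1 : a ≤ c) (h2 : c ≤ b) (h3 : a ≤ d) (h4 : d ≤ b) :
    Set.uIcc c d ⊆ Set.uIcc a b :=
  Set.uIcc_subset_uIcc (Set.mem_uIcc.2 (Or.inl ⟨h1, h2⟩))
    (Set.mem_uIcc.2 (Or.inl ⟨h3, h4⟩))

lemma integral_log_sin2 : ∫ t in (0:ℝ)..(π/2), Real.log (2 * Real.sin t) = 0 := by
  set g : ℝ → ℝ := fun t => Real.log (2 * Real.sin t) with hg
  have hI : IntervalIntegrable g volume 0 (π/2) := integrableOn_log_sin2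
  have hpi : (0:ℝ) < π := Real.pi_pos
  have hI1 : IntervalIntegrable (fun t => g (t/2)) volume 0 (π/2) := by
    have h := hI.comp_mul_left (c := 1/2)
    rw [show (0:ℝ)/(1/2) = 0 by norm_num, show (π/2)/(1/2) = π by ring] at h
    have he : (fun x : ℝ => g (1/2 * x)) = fun x => g (x/2) := by
      funext x; congr 1; ring
    rw [he] at h
    exact h.mono_set (uIcc_sub' le_rfl hpi.le (by positivity) (by linarith))
  have hI2 : IntervalIntegrable (fun t => g (π/2 - t/2)) volume 0 (π/2) := by
    have h0 := (hI.comp_sub_left (π/2)).symm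
    rw [show π/2 - (π/2) = 0 by ring, show π/2 - 0 = π/2 by ring] at h0
    have h := h0.comp_mul_left (c := 1/2)
    rw [show (0:ℝ)/(1/2) = 0 by norm_num, show (π/2)/(1/2) = π by ring] at h
    have he : (fun x : ℝ => g (π/2 - 1/2 * x)) = fun x => g (π/2 - x/2) := by
      funext x; congr 1; ring
    rw [he] at h
    exact h.mono_set (uIcc_sub' le_rfl hpi.le (by positivity) (by linarith))
  have key : ∫ t in (0:ℝ)..(π/2), g t
      = (∫ t in (0:ℝ)..(π/2), g (t/2)) + ∫ t in (0:ℝ)..(π/2), g (π/2 - t/2) := by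
    rw [← intervalIntegral.integral_add hI1 hI2]
    apply intervalIntegral.integral_congr_ae
    filter_upwards with t ht
    rw [Set.uIoc_of_le (by positivity : (0:ℝ) ≤ π/2)] at ht
    obtain ⟨ht0, htp⟩ := ht
    have hs : 0 < Real.sin (t/2) := Real.sin_pos_of_pos_of_lt_pi (by linarith) (by linarith)
    have hc : 0 < Real.cos (t/2) := Real.cos_pos_of_mem_Ioo ⟨by linarith, by linarith⟩
    have hmul : 2 * Real.sin t = (2 * Real.sin (t/2)) * (2 * Real.cos (t/2)) := by
      have h2 : Real.sin t = 2 * Real.sin (t/2) * Real.cos (t/2) := by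
        rw [← Real.sin_two_mul]; ring_nf
      rw [h2]; ring
    have hcos : Real.sin (π/2 - t/2) = Real.cos (t/2) := Real.sin_pi_div_two_sub _
    simp only [hg]
    rw [hmul, Real.log_mul (by positivity) (by positivity), hcos]
  have e1 : ∫ t in (0:ℝ)..(π/2), g (t/2) = 2 * ∫ t in (0:ℝ)..(π/4), g t := by
    rw [intervalIntegral.integral_comp_div (f := g) (c := 2) (by norm_num),
      show (0:ℝ)/2 = 0 by norm_num, show (π/2)/2 = π/4 by ring, smul_eq_mul]
  have e2 : ∫ t in (0:ℝ)..(π/2), g (π/2 - t/2) = 2 * ∫ t in (π/4:ℝ)..(π/2), g t := by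
    rw [intervalIntegral.integral_comp_div (f := fun x => g (π/2 - x)) (c := 2) (by norm_num),
      show (0:ℝ)/2 = 0 by norm_num, show (π/2)/2 = π/4 by ring, smul_eq_mul,
      intervalIntegral.integral_comp_sub_left g (π/2),
      show π/2 - π/4 = π/4 by ring, show π/2 - 0 = π/2 by ring]
  have hadd : (∫ t in (0:ℝ)..(π/4), g t) + ∫ t in (π/4:ℝ)..(π/2), g t
      = ∫ t in (0:ℝ)..(π/2), g t := by
    apply intervalIntegral.integral_add_adjacent_intervals
    · exact hI.mono_set (uIcc_sub' le_rfl (by positivity) (by positivity) (by linarith))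
    · exact hI.mono_set (uIcc_sub' (by positivity) (by linarith) (by positivity) le_rfl)
  have hk := key
  rw [e1, e2] at hk
  linarith

noncomputable def Lob (x : ℝ) : ℝ := -∫ t in (0 : ℝ)..x, Real.log (2 * Real.sin t)

lemma lob_zero : Lob 0 = 0 := by simp [Lob]

lemma lob_pi_div_two : Lob (π/2) = 0 := by
  rw [Lob, integral_log_sin2, neg_zero]

lemma lob_continuousOn : ContinuousOn Lob (Set.Icc 0 (π/2)) := by
  have h := intervalIntegral.continuousOn_primitive_interval'
    (integrableOn_log_sin2) (Set.left_mem_uIcc (a := (0:ℝ)) (b := π/2))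
  rw [Set.uIcc_of_le (by positivity : (0:ℝ) ≤ π/2)] at h
  exact h.neg

lemma tendsto_sin_within : Tendsto Real.sin (𝓝[>](0:ℝ)) (𝓝[>] 0) := by
  rw [tendsto_nhdsWithin_iff]
  constructor
  · have := Real.continuous_sin.tendsto 0
    rw [Real.sin_zero] at this
    exact this.mono_left nhdsWithin_le_nhds
  · filter_upwards [Ioo_mem_nhdsGT_of_mem (Set.mem_Ico.2 ⟨le_rfl, Real.pi_pos⟩)] with x hx
    exact Real.sin_pos_of_pos_of_lt_pi hx.1 hx.2

lemma tendsto_logx_mul_x : Tendsto (fun x : ℝ => Real.log x * x) (𝓝[>](0:ℝ)) (𝓝 0) := by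
  simpa using tendsto_log_mul_rpow_nhdsGT_zero zero_lt_one

lemma tendsto_logsin_mul_sin :
    Tendsto (fun x : ℝ => Real.log (Real.sin x) * Real.sin x) (𝓝[>](0:ℝ)) (𝓝 0) :=
  tendsto_logx_mul_x.comp tendsto_sin_within

lemma tendsto_div_sin : Tendsto (fun x : ℝ => x / Real.sin x) (𝓝[>](0:ℝ)) (𝓝 1) := by
  have hd : HasDerivAt Real.sin 1 0 := by simpa using Real.hasDerivAt_sin 0
  have h1 := hasDerivAt_iff_tendsto_slope.mp hd
  have h2 : Tendsto (fun y : ℝ => Real.sin y / y) (𝓝[>](0:ℝ)) (𝓝 1) := by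
    have h3 := h1.mono_left
      (nhdsWithin_mono 0 (fun x hx => ne_of_gt hx : Set.Ioi (0:ℝ) ⊆ {(0:ℝ)}ᶜ))
    refine h3.congr fun y => ?_
    simp [slope_def_field]
  have h4 := h2.inv₀ one_ne_zero
  simpa [inv_div] using h4

lemma tendsto_x_mul_logsin :
    Tendsto (fun x : ℝ => x * Real.log (Real.sin x)) (𝓝[>](0:ℝ)) (𝓝 0) := by
  have h := tendsto_div_sin.mul tendsto_logsin_mul_sin
  rw [one_mul] at h
  apply h.congr'
  filter_upwards [Ioo_mem_nhdsGT_of_mem (Set.mem_Ico.2 ⟨le_rfl, Real.pi_pos⟩)] with x hx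
  have hs : Real.sin x ≠ 0 := ne_of_gt (Real.sin_pos_of_pos_of_lt_pi hx.1 hx.2)
  field_simp

lemma tendsto_x_mul_logcos :
    Tendsto (fun x : ℝ => x * Real.log (Real.cos x)) (𝓝[>](0:ℝ)) (𝓝 0) := by
  have : ContinuousAt (fun x : ℝ => x * Real.log (Real.cos x)) 0 := by
    apply continuousAt_id.mul
    apply ContinuousAt.log (Real.continuous_cos.continuousAt)
    simp
  have h : Tendsto (fun x : ℝ => x * Real.log (Real.cos x)) (𝓝[>](0:ℝ))
      (𝓝 ((fun x : ℝ => x * Real.log (Real.cos x)) 0)) := this.continuousWithinAt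
  simpa using h

lemma tendsto_x_mul_logtan :
    Tendsto (fun x : ℝ => x * Real.log (Real.tan x)) (𝓝[>](0:ℝ)) (𝓝 0) := by
  have h := tendsto_x_mul_logsin.sub tendsto_x_mul_logcos
  rw [sub_zero] at h
  apply h.congr'
  filter_upwards [Ioo_mem_nhdsGT_of_mem
    (Set.mem_Ico.2 ⟨le_rfl, (by positivity : (0:ℝ) < π/2)⟩)] with x hx
  have hs : Real.sin x ≠ 0 :=
    ne_of_gt (Real.sin_pos_of_pos_of_lt_pi hx.1 (by linarith [Real.pi_pos, hx.1, hx.2]))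
  have hc : Real.cos x ≠ 0 :=
    ne_of_gt (Real.cos_pos_of_mem_Ioo ⟨by linarith [Real.pi_pos, hx.1, hx.2], hx.2⟩)
  rw [Real.tan_eq_sin_div_cos, Real.log_div hs hc]
  ring

lemma tendsto_sin_sq_mul_logtan :
    Tendsto (fun x : ℝ => Real.sin x ^ 2 * Real.log (Real.tan x)) (𝓝[>](0:ℝ)) (𝓝 0) := by
  have h1 : Tendsto (fun x : ℝ => Real.log (Real.sin x) * Real.sin x * Real.sin x)
      (𝓝[>](0:ℝ)) (𝓝 0) := by
    have := tendsto_logsin_mul_sin.mul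
      ((Real.continuous_sin.tendsto 0).mono_left nhdsWithin_le_nhds)
    simpa using this
  have h2 : Tendsto (fun x : ℝ => Real.sin x ^ 2 * Real.log (Real.cos x))
      (𝓝[>](0:ℝ)) (𝓝 0) := by
    have : ContinuousAt (fun x : ℝ => Real.sin x ^ 2 * Real.log (Real.cos x)) 0 := by
      apply ContinuousAt.mul
      · exact (Real.continuous_sin.pow 2).continuousAt
      · exact ContinuousAt.log (Real.continuous_cos.continuousAt) (by simp)
    have h : Tendsto (fun x : ℝ => Real.sin x ^ 2 * Real.log (Real.cos x)) (𝓝[>](0:ℝ))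
        (𝓝 ((fun x : ℝ => Real.sin x ^ 2 * Real.log (Real.cos x)) 0)) := this.continuousWithinAt
    simpa using h
  have h := h1.sub h2
  rw [sub_zero] at h
  apply h.congr'
  filter_upwards [Ioo_mem_nhdsGT_of_mem
    (Set.mem_Ico.2 ⟨le_rfl, (by positivity : (0:ℝ) < π/2)⟩)] with x hx
  have hs : Real.sin x ≠ 0 :=
    ne_of_gt (Real.sin_pos_of_pos_of_lt_pi hx.1 (by linarith [Real.pi_pos, hx.1, hx.2]))
  have hc : Real.cos x ≠ 0 :=
    ne_of_gt (Real.cos_pos_of_mem_Ioo ⟨by linarith [Real.pi_pos, hx.1, hx.2], hx.2⟩)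
  rw [Real.tan_eq_sin_div_cos, Real.log_div hs hc]
  ring

noncomputable def entropyContribution (θ : ℝ) : ℝ :=
  ((π - 2 * θ) / (2 * π)) *
      (Real.log (1 / Real.tan θ) - Real.log (1 / Real.tan (θ / 2)) / Real.cos θ) +
    (1 / π) * (Lob θ + Lob (π / 2 - θ))


lemma eq_near_zero (θ : ℝ) (hθ0 : 0 < θ) (hθp : θ < π/2) :
    ((π - 2*θ)/(2*π)) * (Real.log (Real.cos θ / (2 * Real.cos (θ/2)^2))
        + (Real.sin (θ/2)^2 * Real.log (Real.tan (θ/2))) * (2 / Real.cos θ))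
      + (1/π) * (Lob θ + Lob (π/2 - θ)) = entropyContribution θ := by
  have hπ : (0:ℝ) < π := Real.pi_pos
  have hs : 0 < Real.sin θ := Real.sin_pos_of_pos_of_lt_pi hθ0 (by linarith)
  have hc : 0 < Real.cos θ := Real.cos_pos_of_mem_Ioo ⟨by linarith, hθp⟩
  have hsh : 0 < Real.sin (θ/2) := Real.sin_pos_of_pos_of_lt_pi (by linarith) (by linarith)
  have hch : 0 < Real.cos (θ/2) := Real.cos_pos_of_mem_Ioo ⟨by linarith, by linarith⟩
  have ha : Real.log (Real.sin θ)
      = Real.log 2 + Real.log (Real.sin (θ/2)) + Real.log (Real.cos (θ/2)) := by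
    have h2 : Real.sin θ = 2 * Real.sin (θ/2) * Real.cos (θ/2) := by
      rw [← Real.sin_two_mul]; ring_nf
    rw [h2, Real.log_mul (by positivity) hch.ne', Real.log_mul (by norm_num) hsh.ne']
  have hsq : Real.sin (θ/2)^2 = (1 - Real.cos θ)/2 := by
    rw [Real.sin_sq_eq_half_sub, show 2*(θ/2) = θ by ring]
    ring
  have hlr : Real.log (Real.cos θ / (2 * Real.cos (θ/2)^2))
      = Real.log (Real.cos θ) - (Real.log 2 + 2 * Real.log (Real.cos (θ/2))) := by
    rw [Real.log_div hc.ne' (by positivity), Real.log_mul (by norm_num) (by positivity),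
      Real.log_pow]
    push_cast
    ring
  unfold entropyContribution
  simp only [one_div, Real.log_inv]
  rw [Real.tan_eq_sin_div_cos θ, Real.tan_eq_sin_div_cos (θ/2),
    Real.log_div hs.ne' hc.ne', Real.log_div hsh.ne' hch.ne']
  rw [hlr, hsq, ha]
  field_simp [hc.ne', hπ.ne']
  ring

lemma eq_near_pi_div_two (θ : ℝ) (hθ0 : 0 < θ) (hθp : θ < π/2) :
    (1/π) * ((π/2 - θ) * Real.log (Real.tan (π/2 - θ)))
      + (1/π) * (((π/2 - θ) / Real.sin (π/2 - θ)) * Real.log (Real.tan (θ/2)))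
      + (1/π) * (Lob θ + Lob (π/2 - θ)) = entropyContribution θ := by
  have hπ : (0:ℝ) < π := Real.pi_pos
  have hs : 0 < Real.sin θ := Real.sin_pos_of_pos_of_lt_pi (by linarith) (by linarith)
  have hc : 0 < Real.cos θ := Real.cos_pos_of_mem_Ioo ⟨by linarith, hθp⟩
  have hsφ : Real.sin (π/2 - θ) = Real.cos θ := Real.sin_pi_div_two_sub θ
  have hcφ : Real.cos (π/2 - θ) = Real.sin θ := Real.cos_pi_div_two_sub θ
  unfold entropyContribution
  simp only [one_div, Real.log_inv]
  rw [Real.tan_eq_sin_div_cos θ, Real.tan_eq_sin_div_cos (π/2 - θ), hsφ, hcφ,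
    Real.log_div hs.ne' hc.ne', Real.log_div hc.ne' hs.ne']
  field_simp [hc.ne', hπ.ne']
  ring

set_option maxHeartbeats 800000 in
theorem entropy_contribution_limits :
    Tendsto entropyContribution (nhdsWithin 0 (Set.Ioi 0))
      (nhds (-(1 / 2) * Real.log 2)) ∧
    Tendsto entropyContribution (nhdsWithin (π / 2) (Set.Iio (π / 2)))
      (nhds 0) := by
  have hπ : (0:ℝ) < π := Real.pi_pos
  have hπ2 : (0:ℝ) < π/2 := by positivity
  -- transfer lemmas for Lob
  have key0 : 𝓝[>] (0:ℝ) ≤ 𝓝[Set.Icc 0 (π/2)] 0 := by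
    rw [← nhdsWithin_Ioo_eq_nhdsGT hπ2]
    exact nhdsWithin_mono 0 Set.Ioo_subset_Icc_self
  have keyP : 𝓝[<] (π/2 : ℝ) ≤ 𝓝[Set.Icc 0 (π/2)] (π/2) := by
    rw [← nhdsWithin_Ioo_eq_nhdsLT hπ2]
    exact nhdsWithin_mono _ Set.Ioo_subset_Icc_self
  have hLob0 : Tendsto Lob (𝓝[>](0:ℝ)) (𝓝 0) := by
    have h := lob_continuousOn 0 (Set.mem_Icc.2 ⟨le_rfl, hπ2.le⟩)
    have h2 : Tendsto Lob (𝓝[Set.Icc 0 (π/2)] 0) (𝓝 (Lob 0)) := h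
    rw [lob_zero] at h2
    exact h2.mono_left key0
  have hLobP : Tendsto Lob (𝓝[<](π/2:ℝ)) (𝓝 0) := by
    have h := lob_continuousOn (π/2) (Set.mem_Icc.2 ⟨hπ2.le, le_rfl⟩)
    have h2 : Tendsto Lob (𝓝[Set.Icc 0 (π/2)] (π/2)) (𝓝 (Lob (π/2))) := h
    rw [lob_pi_div_two] at h2
    exact h2.mono_left keyP
  have hmap1 : Tendsto (fun θ : ℝ => π/2 - θ) (𝓝[>](0:ℝ)) (𝓝[<](π/2:ℝ)) := by
    rw [tendsto_nhdsWithin_iff]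
    constructor
    · have : Tendsto (fun θ : ℝ => π/2 - θ) (𝓝 0) (𝓝 (π/2 - 0)) :=
        (continuous_const.sub continuous_id).tendsto 0
      rw [sub_zero] at this
      exact this.mono_left nhdsWithin_le_nhds
    · filter_upwards [self_mem_nhdsWithin] with x hx
      exact Set.mem_Iio.2 (by simp at hx ⊢; linarith)
  have hmap2 : Tendsto (fun θ : ℝ => π/2 - θ) (𝓝[<](π/2:ℝ)) (𝓝[>](0:ℝ)) := by
    rw [tendsto_nhdsWithin_iff]
    constructor
    · have : Tendsto (fun θ : ℝ => π/2 - θ) (𝓝 (π/2)) (𝓝 (π/2 - π/2)) :=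
        (continuous_const.sub continuous_id).tendsto _
      rw [sub_self] at this
      exact this.mono_left nhdsWithin_le_nhds
    · filter_upwards [self_mem_nhdsWithin] with x hx
      exact Set.mem_Ioi.2 (by simp at hx ⊢; linarith)
  have hhalf : Tendsto (fun θ : ℝ => θ/2) (𝓝[>](0:ℝ)) (𝓝[>](0:ℝ)) := by
    rw [tendsto_nhdsWithin_iff]
    constructor
    · have : Tendsto (fun θ : ℝ => θ/2) (𝓝 0) (𝓝 (0/2)) :=
        (continuous_id.div_const 2).tendsto 0
      rw [zero_div] at this
      exact this.mono_left nhdsWithin_le_nhds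
    · filter_upwards [self_mem_nhdsWithin] with x hx
      exact Set.mem_Ioi.2 (by simp at hx ⊢; linarith)
  constructor
  · -- limit at 0⁺
    have hC : Tendsto (fun θ : ℝ => (1/π) * (Lob θ + Lob (π/2 - θ))) (𝓝[>](0:ℝ)) (𝓝 0) := by
      have h := (hLob0.add (hLobP.comp hmap1)).const_mul (1/π)
      simpa using h
    have hA : Tendsto (fun θ : ℝ => (π - 2*θ)/(2*π)) (𝓝[>](0:ℝ)) (𝓝 (1/2)) := by
      have hc : Continuous fun θ : ℝ => (π - 2*θ)/(2*π) :=
        (continuous_const.sub (continuous_const.mul continuous_id)).div_const _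
      have hval : (π - 2*(0:ℝ))/(2*π) = 1/2 := by
        rw [mul_zero, sub_zero]
        field_simp
      rw [← hval]
      exact (hc.tendsto 0).mono_left nhdsWithin_le_nhds
    have hlogr : Tendsto (fun θ : ℝ => Real.log (Real.cos θ / (2 * Real.cos (θ/2)^2)))
        (𝓝[>](0:ℝ)) (𝓝 (-Real.log 2)) := by
      have hcont : ContinuousAt (fun θ : ℝ => Real.log (Real.cos θ / (2 * Real.cos (θ/2)^2))) 0 := by
        apply ContinuousAt.log
        · exact (Real.continuous_cos.continuousAt).div (by fun_prop) (by norm_num)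
        · norm_num
      have h : Tendsto (fun θ : ℝ => Real.log (Real.cos θ / (2 * Real.cos (θ/2)^2)))
          (𝓝[>](0:ℝ)) (𝓝 (Real.log (Real.cos 0 / (2 * Real.cos ((0:ℝ)/2)^2)))) :=
        hcont.continuousWithinAt
      have hval : Real.log (Real.cos 0 / (2 * Real.cos ((0:ℝ)/2)^2)) = -Real.log 2 := by
        norm_num
        rw [← Real.log_inv]
        norm_num
      rwa [hval] at h
    have hS : Tendsto (fun θ : ℝ => (Real.sin (θ/2)^2 * Real.log (Real.tan (θ/2))) * (2 / Real.cos θ))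
        (𝓝[>](0:ℝ)) (𝓝 0) := by
      have h1 : Tendsto (fun θ : ℝ => Real.sin (θ/2)^2 * Real.log (Real.tan (θ/2)))
          (𝓝[>](0:ℝ)) (𝓝 0) := tendsto_sin_sq_mul_logtan.comp hhalf
      have h2 : Tendsto (fun θ : ℝ => 2 / Real.cos θ) (𝓝[>](0:ℝ)) (𝓝 (2 / Real.cos 0)) :=
        (ContinuousAt.div continuousAt_const Real.continuous_cos.continuousAt
          (by norm_num)).continuousWithinAt
      have h := h1.mul h2
      simpa using h
    have hmain : Tendsto (fun θ : ℝ => ((π - 2*θ)/(2*π)) *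
        (Real.log (Real.cos θ / (2 * Real.cos (θ/2)^2))
          + (Real.sin (θ/2)^2 * Real.log (Real.tan (θ/2))) * (2 / Real.cos θ))
        + (1/π) * (Lob θ + Lob (π/2 - θ))) (𝓝[>](0:ℝ)) (𝓝 (-(1/2) * Real.log 2)) := by
      have h := (hA.mul (hlogr.add hS)).add hC
      have : (1/2 : ℝ) * (-Real.log 2 + 0) + 0 = -(1/2) * Real.log 2 := by ring
      rwa [this] at h
    apply hmain.congr'
    filter_upwards [Ioo_mem_nhdsGT_of_mem (Set.mem_Ico.2 ⟨le_rfl, hπ2⟩)] with θ hθ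
    exact eq_near_zero θ hθ.1 hθ.2
  · -- limit at (π/2)⁻
    have hC : Tendsto (fun θ : ℝ => (1/π) * (Lob θ + Lob (π/2 - θ))) (𝓝[<](π/2:ℝ)) (𝓝 0) := by
      have h := (hLobP.add (hLob0.comp hmap2)).const_mul (1/π)
      simpa using h
    have hT1 : Tendsto (fun θ : ℝ => (1/π) * ((π/2 - θ) * Real.log (Real.tan (π/2 - θ))))
        (𝓝[<](π/2:ℝ)) (𝓝 0) := by
      have h := (tendsto_x_mul_logtan.comp hmap2).const_mul (1/π)
      simpa using h
    have hlogtanhalf : Tendsto (fun θ : ℝ => Real.log (Real.tan (θ/2))) (𝓝[<](π/2:ℝ)) (𝓝 0) := by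
      have hcont : ContinuousAt (fun θ : ℝ => Real.log (Real.tan (θ/2))) (π/2) := by
        have ht : ContinuousAt Real.tan ((π/2)/2) := by
          rw [Real.continuousAt_tan]
          have : (π/2)/2 = π/4 := by ring
          rw [this, Real.cos_pi_div_four]
          positivity
        have hth : ContinuousAt (fun θ : ℝ => Real.tan (θ/2)) (π/2) :=
          ht.comp (f := fun θ : ℝ => θ/2) ((continuous_id (X := ℝ)).div_const 2).continuousAt
        apply ContinuousAt.log hth
        rw [show (π/2)/2 = π/4 by ring, Real.tan_pi_div_four]
        norm_num
      have h : Tendsto (fun θ : ℝ => Real.log (Real.tan (θ/2))) (𝓝[<](π/2:ℝ))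
          (𝓝 (Real.log (Real.tan ((π/2)/2)))) := hcont.continuousWithinAt
      rwa [show (π/2)/2 = π/4 by ring, Real.tan_pi_div_four, Real.log_one] at h
    have hT2 : Tendsto (fun θ : ℝ => (1/π) * (((π/2 - θ) / Real.sin (π/2 - θ))
        * Real.log (Real.tan (θ/2)))) (𝓝[<](π/2:ℝ)) (𝓝 0) := by
      have h := (((tendsto_div_sin.comp hmap2)).mul hlogtanhalf).const_mul (1/π)
      simpa using h
    have hmain : Tendsto (fun θ : ℝ =>
        (1/π) * ((π/2 - θ) * Real.log (Real.tan (π/2 - θ)))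
        + (1/π) * (((π/2 - θ) / Real.sin (π/2 - θ)) * Real.log (Real.tan (θ/2)))
        + (1/π) * (Lob θ + Lob (π/2 - θ))) (𝓝[<](π/2:ℝ)) (𝓝 0) := by
      have h := (hT1.add hT2).add hC
      simpa using h
    apply hmain.congr'
    filter_upwards [Ioo_mem_nhdsLT_of_mem (Set.mem_Ioc.2 ⟨hπ2, le_rfl⟩)] with θ hθ
    exact eq_near_pi_div_two θ hθ.1 hθ.2
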